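/- Let f : [0,1]^d → ℝ be a continuous convex function and let ε > 0. Then there exist finitely many affine functions L_1, …, L_k : ℝ^d → ℝ, each of which is a supporting hyperplane of f (i.e., L_j(x) ≤ f(x) for all x ∈ [0,1]^d, with equality at some point of [0,1]^d), such that 0 ≤ f(x) − max_{1 ≤ j ≤ k} L_j(x) ≤ (d+1)ε for all x ∈ [0,1]^d. Consequently, pointwise maxima of finitely many affine functions are dense in the space of continuous convex functions on [0,1]^d with respect to the supremum norm. -/

import Mathlib

open MeasureTheory Filter Topology Set
open scoped RealInnerProductSpace

lemma aux_exists_subgradient {V : Type*} [NormedAddCommGroup V] [InnerProductSpace ℝ V]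
    [CompleteSpace V]
    {C : Set V} {f : V → ℝ} (hf : ConvexOn ℝ C f)
    (hfc : ContinuousOn f C) {y : V} (hy : y ∈ interior C) :
    ∃ a : V, ∀ x ∈ C, ⟪a, x⟫ - ⟪a, y⟫ + f y ≤ f x := by
  classical
  set E : Set (V × ℝ) := {p : V × ℝ | p.1 ∈ C ∧ f p.1 ≤ p.2} with hE
  have hEconv : Convex ℝ E := hf.convex_epigraph
  have hyC : y ∈ C := interior_subset hy
  have hq : (y, f y + 1) ∈ interior E := by
    have hcont : ContinuousWithinAt f C y := hfc y hyC
    have hC' : C ∈ 𝓝 y := mem_interior_iff_mem_nhds.mp hy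
    have hcont' : ContinuousAt f y := hcont.continuousAt hC'
    have hlt : ∀ᶠ x in 𝓝 y, f x < f y + 1/2 := by
      have := hcont'.eventually_lt_const (by linarith : f y < f y + 1/2)
      exact this
    obtain ⟨U, hUsub, hUopen, hyU⟩ := mem_nhds_iff.mp (Filter.inter_mem hC' hlt)
    have : U ×ˢ Ioi (f y + 1/2) ⊆ E := by
      rintro ⟨x, t⟩ ⟨hxU, ht⟩
      have h' := hUsub hxU
      exact ⟨h'.1, le_of_lt (lt_trans h'.2 (mem_Ioi.mp ht))⟩
    refine mem_interior.mpr ⟨U ×ˢ Ioi (f y + 1/2), this, hUopen.prod isOpen_Ioi, ?_, ?_⟩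
    · exact hyU
    · simp; linarith
  have hnotmem : (y, f y) ∉ interior E := by
    intro h
    have : ∀ᶠ p : V × ℝ in 𝓝 (y, f y), p ∈ E := mem_interior_iff_mem_nhds.mp h
    have h2 : Filter.Tendsto (fun t : ℝ => ((y, f y - t) : V × ℝ)) (𝓝[>] 0) (𝓝 (y, f y)) := by
      apply Filter.Tendsto.mono_left _ nhdsWithin_le_nhds
      have : Filter.Tendsto (fun t : ℝ => f y - t) (𝓝 0) (𝓝 (f y - 0)) :=
        (tendsto_const_nhds.sub Filter.tendsto_id)
      simpa using (tendsto_const_nhds.prodMk_nhds this)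
    have h3 := (h2.eventually this).and (self_mem_nhdsWithin (s := Ioi (0:ℝ)))
    obtain ⟨t, htE, ht⟩ := h3.exists
    obtain ⟨-, htf⟩ := htE
    simp only at htf
    linarith [show (0:ℝ) < t from ht]
  obtain ⟨φ, hφ⟩ := geometric_hahn_banach_open_point (hEconv.interior) isOpen_interior hnotmem
  have hEle : ∀ p ∈ E, φ p ≤ φ (y, f y) := by
    intro p hp
    have hseg : ∀ s : ℝ, 0 < s → s ≤ 1 → φ ((1 - s) • p + s • ((y, f y + 1) : V × ℝ)) < φ (y, f y) := by
      intro s hs hs1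
      apply hφ
      exact hEconv.combo_self_interior_mem_interior hp hq (by linarith) hs (by ring)
    have hlim : Filter.Tendsto (fun s : ℝ => φ ((1 - s) • p + s • ((y, f y + 1) : V × ℝ)))
        (𝓝[>] 0) (𝓝 (φ p)) := by
      have : Continuous (fun s : ℝ => φ ((1 - s) • p + s • ((y, f y + 1) : V × ℝ))) := by
        fun_prop
      have h0 : φ ((1 - (0:ℝ)) • p + (0:ℝ) • ((y, f y + 1) : V × ℝ)) = φ p := by simp
      simpa [h0] using (this.tendsto 0).mono_left nhdsWithin_le_nhds
    refine le_of_tendsto hlim ?_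
    filter_upwards [self_mem_nhdsWithin, Ioo_mem_nhdsGT_of_mem (by norm_num : (0:ℝ) ∈ Ico 0 1)]
      with s hs hs'
    exact le_of_lt (hseg s (mem_Ioi.mp hs) (le_of_lt hs'.2))
  set c : ℝ := φ (0, 1) with hc
  have hcneg : c < 0 := by
    have h1 := hφ _ hq
    have : φ (y, f y + 1) = φ (y, f y) + c := by
      rw [hc, ← map_add]
      congr 1
      simp [Prod.ext_iff]
    linarith
  set ψ : V → ℝ := fun x => φ (x, 0) with hψ
  have hφeq : ∀ x t, φ (x, t) = ψ x + t * c := by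
    intro x t
    have : ((x, t) : V × ℝ) = (x, 0) + t • ((0 : V), (1:ℝ)) := by simp [Prod.ext_iff]
    rw [this, map_add, _root_.map_smul]
    simp [hψ, hc, smul_eq_mul]
  set ψL : V →L[ℝ] ℝ := φ.comp (ContinuousLinearMap.inl ℝ V ℝ) with hψL
  set a₀ : V := (InnerProductSpace.toDual ℝ V).symm ψL with ha₀
  have ha₀app : ∀ x, ⟪a₀, x⟫ = ψ x := fun x => InnerProductSpace.toDual_symm_apply
  refine ⟨(-c)⁻¹ • a₀, ?_⟩
  intro x hx
  have hxE : ((x, f x) : V × ℝ) ∈ E := ⟨hx, le_refl _⟩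
  have h1 := hEle _ hxE
  rw [hφeq, hφeq] at h1
  have hinner : ∀ z, ⟪(-c)⁻¹ • a₀, z⟫ = (-c)⁻¹ * ψ z := by
    intro z
    rw [real_inner_smul_left, ha₀app]
  rw [hinner, hinner]
  have hcpos : 0 < -c := by linarith
  have he : (-c) * (f x - f y) = f y * c - f x * c := by ring
  have h2 : ψ x - ψ y ≤ (-c) * (f x - f y) := by linarith
  have h3 : (-c)⁻¹ * (ψ x - ψ y) ≤ f x - f y := by
    rw [inv_mul_le_iff₀ hcpos]; linarith
  have h4 : (-c)⁻¹ * ψ x - (-c)⁻¹ * ψ y = (-c)⁻¹ * (ψ x - ψ y) := by ring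
  linarith

lemma aux_abs_coord_le {d : ℕ} (z : EuclideanSpace ℝ (Fin d)) (i : Fin d) : |z i| ≤ ‖z‖ := by
  rw [EuclideanSpace.norm_eq, ← Real.sqrt_sq_eq_abs]
  apply Real.sqrt_le_sqrt
  calc z i ^ 2 = ‖z i‖ ^ 2 := by rw [Real.norm_eq_abs, sq_abs]
    _ ≤ ∑ j : Fin d, ‖z j‖ ^ 2 :=
      Finset.single_le_sum (f := fun j => ‖z j‖ ^ 2) (fun j _ => sq_nonneg _) (Finset.mem_univ i)

lemma aux_norm_le_coords {d : ℕ} (z : EuclideanSpace ℝ (Fin d)) {r : ℝ} (hr : 0 ≤ r)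
    (h : ∀ i, |z i| ≤ r) : ‖z‖ ≤ r * Real.sqrt d := by
  rw [EuclideanSpace.norm_eq]
  have h1 : ∑ i, ‖z i‖ ^ 2 ≤ (d : ℝ) * r ^ 2 := by
    calc ∑ i, ‖z i‖ ^ 2 ≤ ∑ _i : Fin d, r ^ 2 := by
          apply Finset.sum_le_sum
          intro i _
          rw [Real.norm_eq_abs, ← sq_abs (|z i|), abs_abs]
          exact pow_le_pow_left₀ (abs_nonneg _) (h i) 2
      _ = (d : ℝ) * r ^ 2 := by simp [Finset.sum_const, Finset.card_univ]
  calc Real.sqrt (∑ i, ‖z i‖ ^ 2) ≤ Real.sqrt ((d:ℝ) * r ^ 2) := Real.sqrt_le_sqrt h1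
    _ = r * Real.sqrt d := by
        rw [Real.sqrt_mul (Nat.cast_nonneg d), Real.sqrt_sq hr, mul_comm]

set_option maxHeartbeats 1600000 in
/-- A continuous convex function on the unit cube `[0,1]^d` can be approximated to within
`(d+1)ε` in supremum norm (from below) by the pointwise maximum of finitely many affine
supporting hyperplanes. -/
theorem convex_approx_by_max_of_affine
    (d : ℕ) (f : EuclideanSpace ℝ (Fin d) → ℝ)
    (C : Set (EuclideanSpace ℝ (Fin d)))
    (hCdef : C = {x : EuclideanSpace ℝ (Fin d) | ∀ i, x i ∈ Icc (0 : ℝ) 1})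
    (hfc : ContinuousOn f C) (hfconv : ConvexOn ℝ C f)
    (ε : ℝ) (hε : 0 < ε) :
    ∃ (k : ℕ) (_ : 0 < k) (a : Fin k → EuclideanSpace ℝ (Fin d)) (b : Fin k → ℝ),
      (∀ j : Fin k,
        (∀ x ∈ C, ⟪a j, x⟫ + b j ≤ f x) ∧ (∃ x ∈ C, ⟪a j, x⟫ + b j = f x)) ∧
      (∀ x ∈ C,
        0 ≤ f x - (⨆ j : Fin k, (⟪a j, x⟫ + b j)) ∧
        f x - (⨆ j : Fin k, (⟪a j, x⟫ + b j)) ≤ ((d : ℝ) + 1) * ε) := by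
  classical
  have hd0 : (0:ℝ) ≤ d := Nat.cast_nonneg d
  have hsd : Real.sqrt d ≤ d := by
    rcases Nat.eq_zero_or_pos d with h|h
    · simp [h]
    · have h1 : (1:ℝ) ≤ d := by exact_mod_cast h
      have h2 : Real.sqrt d ≤ Real.sqrt ((d:ℝ)^2) := Real.sqrt_le_sqrt (by nlinarith)
      rwa [Real.sqrt_sq hd0] at h2
  set ε' : ℝ := ε / (d + 3) with hε'def
  have hε' : 0 < ε' := by positivity
  -- membership criterion
  have hmemC : ∀ x : EuclideanSpace ℝ (Fin d), x ∈ C ↔ ∀ i, 0 ≤ x i ∧ x i ≤ 1 := by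
    intro x; rw [hCdef]; simp [mem_Icc]
  -- convexity of C
  have hCconv : Convex ℝ C := by
    intro x hx y hy α β hα hβ hαβ
    rw [hmemC] at *
    intro i
    have hxi := (hx i); have hyi := (hy i)
    have hcoord : (α • x + β • y) i = α * x i + β * y i := rfl
    rw [hcoord]
    constructor
    · nlinarith [hxi.1, hyi.1]
    · nlinarith [hxi.2, hyi.2]
  -- compactness of C
  have hCclosed : IsClosed C := by
    have : C = ⋂ i, (fun x : EuclideanSpace ℝ (Fin d) => x i) ⁻¹' (Icc (0:ℝ) 1) := by
      rw [hCdef]; ext x; simp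
    rw [this]
    exact isClosed_iInter fun i =>
      IsClosed.preimage (EuclideanSpace.proj (𝕜 := ℝ) i).continuous isClosed_Icc
  have hCbdd : Bornology.IsBounded C := by
    apply (Metric.isBounded_closedBall (x := (0:EuclideanSpace ℝ (Fin d))) (r := Real.sqrt d)).subset
    intro x hx
    rw [Metric.mem_closedBall, dist_zero_right]
    have := aux_norm_le_coords (d := d) x (r := 1) zero_le_one (fun i => by
      rw [hmemC] at hx
      rw [abs_le]; constructor <;> linarith [(hx i).1, (hx i).2])
    simpa using this
  have hCcomp : IsCompact C := Metric.isCompact_of_isClosed_isBounded hCclosed hCbdd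
  -- uniform continuity
  have hUC : UniformContinuousOn f C := hCcomp.uniformContinuousOn_of_continuous hfc
  obtain ⟨δu, hδu, hmod⟩ := Metric.uniformContinuousOn_iff.mp hUC ε' hε'
  -- shrinking parameter
  set δ' : ℝ := min 1 (δu / (Real.sqrt d + 1)) with hδ'def
  have hsdpos : 0 < Real.sqrt d + 1 := by positivity
  have hδ'pos : 0 < δ' := lt_min one_pos (by positivity)
  have hδ'le1 : δ' ≤ 1 := min_le_left _ _
  have hδ'leδu : δ' ≤ δu := le_trans (min_le_right _ _) (by
    rw [div_le_iff₀ hsdpos]; nlinarith [Real.sqrt_nonneg (d:ℝ)])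
  have hδ'sd : δ' * Real.sqrt d ≤ δu := by
    have h1 : δ' ≤ δu / (Real.sqrt d + 1) := min_le_right _ _
    have h2 : δ' * Real.sqrt d ≤ (δu / (Real.sqrt d + 1)) * Real.sqrt d :=
      mul_le_mul_of_nonneg_right h1 (Real.sqrt_nonneg _)
    refine le_trans h2 ?_
    rw [div_mul_eq_mul_div, div_le_iff₀ hsdpos]
    nlinarith [Real.sqrt_nonneg (d:ℝ)]
  -- the shrinking map
  set c₀ : EuclideanSpace ℝ (Fin d) := WithLp.toLp 2 (fun _ => 1/2 : Fin d → ℝ) with hc₀def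
  set θ : ℝ := 1 - δ' with hθdef
  set T : EuclideanSpace ℝ (Fin d) → EuclideanSpace ℝ (Fin d) := fun x => c₀ + θ • (x - c₀) with hTdef
  have hTcoord : ∀ (x : EuclideanSpace ℝ (Fin d)) (i : Fin d), T x i = 1/2 + θ * (x i - 1/2) := by
    intro x i; rfl
  have hTC : ∀ x ∈ C, ∀ i, δ'/2 ≤ T x i ∧ T x i ≤ 1 - δ'/2 := by
    intro x hx i
    rw [hmemC] at hx
    rw [hTcoord]
    have h1 := (hx i).1; have h2 := (hx i).2
    have hθ0 : 0 ≤ θ := by rw [hθdef]; linarith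
    constructor
    · nlinarith
    · nlinarith
  have hTmemC : ∀ x ∈ C, T x ∈ C := by
    intro x hx
    rw [hmemC]
    intro i
    have := hTC x hx i
    constructor <;> linarith [hδ'pos]
  have hball : ∀ y : EuclideanSpace ℝ (Fin d), (∀ i, δ'/2 ≤ y i ∧ y i ≤ 1 - δ'/2) →
      ∀ z : EuclideanSpace ℝ (Fin d), ‖z‖ ≤ δ'/2 → y + z ∈ C := by
    intro y hy z hz
    rw [hmemC]
    intro i
    have h1 := aux_abs_coord_le z i
    have h2 : |z i| ≤ δ'/2 := le_trans h1 hz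
    rw [abs_le] at h2
    have hcoord : (y + z) i = y i + z i := rfl
    rw [hcoord]
    constructor <;> [linarith [(hy i).1, h2.1]; linarith [(hy i).2, h2.2]]
  have hTxdist : ∀ x ∈ C, ‖x - T x‖ ≤ δ' * Real.sqrt d / 2 := by
    intro x hx
    have hco : ∀ i, (x - T x) i = δ' * (x i - 1/2) := by
      intro i
      have h1 : (x - T x) i = x i - T x i := rfl
      rw [h1, hTcoord, hθdef]; ring
    have := aux_norm_le_coords (d := d) (x - T x) (r := δ'/2) (by positivity) (fun i => by
      rw [hco i, abs_mul, abs_of_pos hδ'pos]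
      rw [hmemC] at hx
      have := (hx i)
      have h2 : |x i - 1/2| ≤ 1/2 := by rw [abs_le]; constructor <;> linarith [this.1, this.2]
      nlinarith)
    calc ‖x - T x‖ ≤ δ'/2 * Real.sqrt d := this
      _ = δ' * Real.sqrt d / 2 := by ring
  -- interior points
  have hint : ∀ y : EuclideanSpace ℝ (Fin d), (∀ i, δ'/2 ≤ y i ∧ y i ≤ 1 - δ'/2) → y ∈ interior C := by
    intro y hy
    refine mem_interior.mpr ⟨Metric.ball y (δ'/2), ?_, Metric.isOpen_ball, Metric.mem_ball_self (by positivity)⟩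
    intro z hz
    have : z = y + (z - y) := by abel
    rw [this]
    exact hball y hy (z - y) (by
      rw [Metric.mem_ball, dist_eq_norm] at hz; linarith)
  -- finite cover of T '' C
  have hKcomp : IsCompact (T '' C) := by
    apply hCcomp.image
    rw [hTdef]
    fun_prop
  obtain ⟨t, htsub, htfin, htcov⟩ := hKcomp.finite_cover_balls (e := δ'/2) (by positivity)
  -- t is nonempty
  have h0C : (0 : EuclideanSpace ℝ (Fin d)) ∈ C := by
    rw [hmemC]; intro i
    have h : (0 : EuclideanSpace ℝ (Fin d)) i = 0 := rfl
    rw [h]; norm_num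
  have htne : t.Nonempty := by
    by_contra h
    rw [Set.not_nonempty_iff_eq_empty] at h
    have := htcov ⟨0, h0C, rfl⟩
    simp [h] at this
  -- coordinates of points of t
  have htprops : ∀ y ∈ t, (∀ i, δ'/2 ≤ y i ∧ y i ≤ 1 - δ'/2) := by
    intro y hy
    obtain ⟨x, hxC, rfl⟩ := htsub hy
    exact hTC x hxC
  have htC : ∀ y ∈ t, y ∈ C := by
    intro y hy
    obtain ⟨x, hxC, rfl⟩ := htsub hy
    exact hTmemC x hxC
  -- subgradients with norm bound
  have hexists : ∀ y ∈ t, ∃ a : EuclideanSpace ℝ (Fin d),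
      (∀ x ∈ C, ⟪a, x⟫ - ⟪a, y⟫ + f y ≤ f x) ∧ ‖a‖ * (δ'/2) ≤ ε' := by
    intro y hy
    obtain ⟨a, ha⟩ := aux_exists_subgradient hfconv hfc (hint y (htprops y hy))
    refine ⟨a, ha, ?_⟩
    rcases eq_or_ne a 0 with rfl | hane
    · simp [hε'.le]
    · have hna : 0 < ‖a‖ := norm_pos_iff.mpr hane
      set z : EuclideanSpace ℝ (Fin d) := ((δ'/2) / ‖a‖) • a with hzdef
      have hnz : ‖z‖ = δ'/2 := by
        have hpos : (0:ℝ) < δ' / 2 / ‖a‖ := by positivity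
        rw [hzdef, norm_smul, Real.norm_eq_abs, abs_of_pos hpos,
          div_mul_cancel₀ _ (ne_of_gt hna)]
      have hyzC : y + z ∈ C := hball y (htprops y hy) z (le_of_eq hnz)
      have hinner : ⟪a, z⟫ = (δ'/2) * ‖a‖ := by
        rw [hzdef, real_inner_smul_right, real_inner_self_eq_norm_sq]
        have h5 : δ' / 2 / ‖a‖ * ‖a‖ ^ 2 = δ' / 2 * ‖a‖ := by
          field_simp
        exact h5
      have hfd : dist (f (y + z)) (f y) < ε' := by
        apply hmod _ hyzC _ (htC y hy)
        rw [dist_eq_norm]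
        simp only [add_sub_cancel_left]
        rw [hnz]; linarith
      rw [Real.dist_eq, abs_lt] at hfd
      have h1 := ha (y + z) hyzC
      rw [inner_add_right] at h1
      -- ⟪a,y⟫ + ⟪a,z⟫ - ⟪a,y⟫ + f y ≤ f (y+z)
      have h2 : ⟪a, z⟫ ≤ f (y + z) - f y := by linarith
      rw [hinner] at h2
      nlinarith [hfd.2]
  choose! A hA hAnorm using hexists
  -- enumerate t
  set l : Finset (EuclideanSpace ℝ (Fin d)) := htfin.toFinset with hldef
  have hlt : ∀ y, y ∈ l ↔ y ∈ t := fun y => htfin.mem_toFinset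
  set k : ℕ := l.card with hkdef
  have hk : 0 < k := by
    rw [hkdef, Finset.card_pos]
    obtain ⟨y, hy⟩ := htne
    exact ⟨y, (hlt y).mpr hy⟩
  haveI : Nonempty (Fin k) := Fin.pos_iff_nonempty.mp hk
  set yy : Fin k → EuclideanSpace ℝ (Fin d) := fun j => ((l.equivFin.symm j : l) : EuclideanSpace ℝ (Fin d)) with hyydef
  have hyyt : ∀ j, yy j ∈ t := fun j => (hlt _).mp (l.equivFin.symm j).2
  refine ⟨k, hk, fun j => A (yy j), fun j => f (yy j) - ⟪A (yy j), yy j⟫, ?_, ?_⟩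
  · intro j
    constructor
    · intro x hx
      show ⟪A (yy j), x⟫ + (f (yy j) - ⟪A (yy j), yy j⟫) ≤ f x
      have := hA (yy j) (hyyt j) x hx
      linarith
    · refine ⟨yy j, htC _ (hyyt j), ?_⟩
      show ⟪A (yy j), yy j⟫ + (f (yy j) - ⟪A (yy j), yy j⟫) = f (yy j)
      ring
  · intro x hx
    show 0 ≤ f x - (⨆ j : Fin k, (⟪A (yy j), x⟫ + (f (yy j) - ⟪A (yy j), yy j⟫))) ∧
      f x - (⨆ j : Fin k, (⟪A (yy j), x⟫ + (f (yy j) - ⟪A (yy j), yy j⟫))) ≤ ((d:ℝ) + 1) * ε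
    have hle : ∀ j : Fin k, ⟪A (yy j), x⟫ + (f (yy j) - ⟪A (yy j), yy j⟫) ≤ f x := by
      intro j
      have := hA (yy j) (hyyt j) x hx
      linarith
    have hsup_le : (⨆ j : Fin k, (⟪A (yy j), x⟫ + (f (yy j) - ⟪A (yy j), yy j⟫))) ≤ f x :=
      ciSup_le hle
    refine ⟨by linarith, ?_⟩
    -- find a good j
    have hTx : T x ∈ T '' C := ⟨x, hx, rfl⟩
    obtain ⟨y, hyt, hydist⟩ := by
      have := htcov hTx
      simpa using this
    set j : Fin k := l.equivFin ⟨y, (hlt y).mpr hyt⟩ with hjdef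
    have hyyj : yy j = y := by
      show ((l.equivFin.symm (l.equivFin ⟨y, (hlt y).mpr hyt⟩) : l) : EuclideanSpace ℝ (Fin d)) = y
      rw [Equiv.symm_apply_apply]
    have hbdd : BddAbove (Set.range fun j : Fin k => ⟪A (yy j), x⟫ + (f (yy j) - ⟪A (yy j), yy j⟫)) :=
      Set.Finite.bddAbove (Set.finite_range _)
    have hjle := le_ciSup hbdd j
    -- error bound at j
    have e1 : |f x - f (T x)| < ε' := by
      have := hmod x hx (T x) (hTmemC x hx) (by
        rw [dist_eq_norm]
        calc ‖x - T x‖ ≤ δ' * Real.sqrt d / 2 := hTxdist x hx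
          _ < δu := by nlinarith [hδ'sd, hδu])
      rwa [Real.dist_eq] at this
    have e2 : |f (T x) - f y| < ε' := by
      have := hmod (T x) (hTmemC x hx) y (htC y hyt) (by
        calc dist (T x) y < δ'/2 := hydist
          _ ≤ δu := by linarith)
      rwa [Real.dist_eq] at this
    have e3 : ⟪A y, y - x⟫ ≤ ‖A y‖ * ‖y - x‖ := real_inner_le_norm _ _
    have e4 : ‖y - x‖ ≤ δ'/2 + δ' * Real.sqrt d / 2 := by
      calc ‖y - x‖ = ‖(y - T x) + (T x - x)‖ := by abel_nf
        _ ≤ ‖y - T x‖ + ‖T x - x‖ := norm_add_le _ _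
        _ ≤ δ'/2 + δ' * Real.sqrt d / 2 := by
            gcongr
            · rw [← dist_eq_norm, dist_comm]; exact le_of_lt hydist
            · rw [norm_sub_rev]; exact hTxdist x hx
    have e5 : ‖A y‖ * ‖y - x‖ ≤ ε' * (1 + Real.sqrt d) := by
      have hAn := hAnorm y hyt
      have hAn0 : 0 ≤ ‖A y‖ := norm_nonneg _
      calc ‖A y‖ * ‖y - x‖ ≤ ‖A y‖ * (δ'/2 + δ' * Real.sqrt d / 2) := by
            apply mul_le_mul_of_nonneg_left e4 hAn0
        _ = (‖A y‖ * (δ'/2)) * (1 + Real.sqrt d) := by ring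
        _ ≤ ε' * (1 + Real.sqrt d) := by
            apply mul_le_mul_of_nonneg_right hAn
            nlinarith [Real.sqrt_nonneg (d:ℝ)]
    have e6 : ε' * (1 + Real.sqrt d) ≤ ε' * (1 + d) := by
      apply mul_le_mul_of_nonneg_left _ hε'.le
      linarith
    have hinner2 : ⟪A (yy j), x⟫ - ⟪A (yy j), yy j⟫ = -⟪A y, y - x⟫ := by
      rw [hyyj, inner_sub_right]; ring
    have key : f x - (⟪A (yy j), x⟫ + (f (yy j) - ⟪A (yy j), yy j⟫)) ≤ ((d:ℝ) + 3) * ε' := by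
      rw [hyyj] at *
      have : f x - (⟪A y, x⟫ + (f y - ⟪A y, y⟫)) = (f x - f (T x)) + (f (T x) - f y) + ⟪A y, y - x⟫ := by
        rw [inner_sub_right]; ring
      rw [this]
      have a1 := abs_lt.mp e1
      have a2 := abs_lt.mp e2
      linarith [a1.2, a2.2, e3, e5, e6]
    have hεeq : ((d:ℝ) + 3) * ε' = ε := by
      rw [hε'def]; field_simp
    have hfin : f x - (⨆ j : Fin k, (⟪A (yy j), x⟫ + (f (yy j) - ⟪A (yy j), yy j⟫))) ≤ ε := by
      have := le_ciSup hbdd j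
      calc f x - (⨆ j : Fin k, (⟪A (yy j), x⟫ + (f (yy j) - ⟪A (yy j), yy j⟫)))
          ≤ f x - (⟪A (yy j), x⟫ + (f (yy j) - ⟪A (yy j), yy j⟫)) := by linarith
        _ ≤ ((d:ℝ) + 3) * ε' := key
        _ = ε := hεeq
    calc f x - (⨆ j : Fin k, (⟪A (yy j), x⟫ + (f (yy j) - ⟪A (yy j), yy j⟫))) ≤ ε := hfin
      _ ≤ ((d:ℝ) + 1) * ε := by nlinarith
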